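/- The self-normalized deterministic-allocation estimator (∑_{k=1}^K ∑_{j=1}^J w(X_{k,j}) ψ(X_{k,j})) / (∑_{k=1}^K ∑_{j=1}^J w(X_{k,j})) (defined to be 0 when the denominator vanishes) converges in L²(P) to ∫_𝒳 ψ π dν as J → ∞; in particular it is a weakly consistent estimator of the target mean. (Corollary A.1 of the paper, single-importance-sampling-step case: the IMMPF with an equal, deterministically chosen number of particles per regime exhibits L² convergence under the same conditions as Theorem 1.) -/

import Mathlib

open MeasureTheory ProbabilityTheory Filter
open scoped ENNReal NNReal

lemma aux_real (M μ0 S D n : ℝ) (hM : 0 ≤ M) (hμ : |μ0| ≤ M) (hD : 0 ≤ D)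
    (hSD : |S| ≤ M * D) (hn : 0 < n) :
    (S / D - μ0) ^ 2 ≤ 8 * (S / n - μ0) ^ 2 + (8 * μ0 ^ 2 + 16 * M ^ 2) * (D / n - 1) ^ 2 := by
  set s := S / n with hs
  set d := D / n with hd
  have hd0 : 0 ≤ d := div_nonneg hD hn.le
  have hRd : S / D = s / d := by
    rcases eq_or_ne D 0 with h | h
    · simp [h, hd, hs]
    · rw [hs, hd]; field_simp
  have hRb : |S / D| ≤ M := by
    rcases eq_or_ne D 0 with h | h
    · have : S = 0 := by
        have := hSD; rw [h, mul_zero] at this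
        exact abs_eq_zero.mp (le_antisymm this (abs_nonneg _))
      simp [h, this, hM]
    · have hDpos : 0 < D := lt_of_le_of_ne hD (Ne.symm h)
      rw [abs_div, abs_of_pos hDpos, div_le_iff₀ hDpos]
      linarith [hSD]
  rw [hRd]
  rcases le_or_gt (1/2 : ℝ) d with hhalf | hhalf
  · have hdpos : 0 < d := by linarith
    set R := s / d with hR
    have hsR : s = R * d := by rw [hR, div_mul_cancel₀ s hdpos.ne']
    rw [hsR]
    nlinarith [sq_nonneg ((R - μ0) * d + 2 * μ0 * (d - 1)),
      mul_nonneg (mul_nonneg (by linarith : (0:ℝ) ≤ 2*d - 1) (by linarith : (0:ℝ) ≤ 2*d + 1))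
        (sq_nonneg (R - μ0)), sq_nonneg (M * (d - 1)), sq_nonneg (μ0 * (d - 1))]
  · rw [← hRd]
    have h14 : 1/4 ≤ (d - 1)^2 := by nlinarith
    obtain ⟨h1, h2⟩ := abs_le.mp hRb
    obtain ⟨h3, h4⟩ := abs_le.mp hμ
    nlinarith [sq_nonneg (s - μ0), sq_nonneg (μ0 * (d-1)), sq_nonneg M]

theorem detMIS_selfNormalized_L2_convergence
    {𝒳 : Type*} [MeasurableSpace 𝒳] (ν : Measure 𝒳) [SigmaFinite ν]
    (K : ℕ) (hK : 1 ≤ K)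
    (q : Fin K → 𝒳 → ℝ) (hq_meas : ∀ k, Measurable (q k))
    (hq_nonneg : ∀ k x, 0 ≤ q k x) (hq_int : ∀ k, ∫ x, q k x ∂ν = 1)
    (π0 : 𝒳 → ℝ) (hπ0_meas : Measurable π0) (hπ0_nonneg : ∀ x, 0 ≤ π0 x)
    (hπ0_int : ∫ x, π0 x ∂ν = 1)
    (qbar : 𝒳 → ℝ) (hqbar : qbar = fun x => (K : ℝ)⁻¹ * ∑ k : Fin K, q k x)
    (w : 𝒳 → ℝ) (hw : w = fun x => π0 x / qbar x)
    (hac : ∀ᵐ x ∂ν, qbar x = 0 → π0 x = 0)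
    (C : ℝ) (hC : 0 < C) (hw_bdd : ∀ᵐ x ∂ν, w x ≤ C)
    (ψ : 𝒳 → ℝ) (hψ_meas : Measurable ψ) (M : ℝ) (hψ_bdd : ∀ x, |ψ x| ≤ M)
    {Ω : Type*} [MeasurableSpace Ω] (P : Measure Ω) [IsProbabilityMeasure P]
    (X : Fin K → ℕ → Ω → 𝒳) (hX_meas : ∀ k j, Measurable (X k j))
    (hX_law : ∀ k j, P.map (X k j) = ν.withDensity (fun x => ENNReal.ofReal (q k x)))
    (hX_indep : iIndepFun (fun p : Fin K × ℕ => X p.1 p.2) P) :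
    Tendsto
      (fun J : ℕ =>
        ∫ ω, ((∑ k : Fin K, ∑ j ∈ Finset.range J, w (X k j ω) * ψ (X k j ω)) /
                (∑ k : Fin K, ∑ j ∈ Finset.range J, w (X k j ω))
              - ∫ x, ψ x * π0 x ∂ν) ^ 2 ∂P)
      atTop (nhds 0) := by
  classical
  have hKpos : (0:ℝ) < K := by exact_mod_cast hK
  have hKne : (K:ℝ) ≠ 0 := hKpos.ne'
  -- integrability of densities
  have hπ0_integrable : Integrable π0 ν := by
    by_contra h
    rw [integral_undef h] at hπ0_int
    exact one_ne_zero hπ0_int.symm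
  have hq_integrable : ∀ k, Integrable (q k) ν := by
    intro k
    by_contra h
    have := hq_int k
    rw [integral_undef h] at this
    exact one_ne_zero this.symm
  have hM0 : 0 ≤ M := by
    rcases isEmpty_or_nonempty 𝒳 with hE | hNE
    · exfalso
      have : (ν : Measure 𝒳) = 0 := by
        ext s hs
        simp [Set.eq_empty_of_isEmpty s]
      rw [this] at hπ0_int
      simp at hπ0_int
    · obtain ⟨x⟩ := hNE
      exact (abs_nonneg _).trans (hψ_bdd x)
  have hqbar_meas : Measurable qbar := by
    rw [hqbar]; exact (Finset.measurable_sum _ fun k _ => hq_meas k).const_mul _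
  have hqbar_nonneg : ∀ x, 0 ≤ qbar x := by
    intro x; rw [hqbar]
    exact mul_nonneg (by positivity) (Finset.sum_nonneg fun k _ => hq_nonneg k x)
  have hw_meas : Measurable w := by rw [hw]; exact hπ0_meas.div hqbar_meas
  have hw_nonneg : ∀ x, 0 ≤ w x := by
    intro x; rw [hw]; exact div_nonneg (hπ0_nonneg x) (hqbar_nonneg x)
  set μ0 := ∫ x, ψ x * π0 x ∂ν with hμ0def
  have hψπ_int : Integrable (fun x => ψ x * π0 x) ν := by
    refine (hπ0_integrable.const_mul M).mono' ((hψ_meas.mul hπ0_meas).aestronglyMeasurable) ?_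
    refine Eventually.of_forall fun x => ?_
    rw [Real.norm_eq_abs, abs_mul, abs_of_nonneg (hπ0_nonneg x)]
    exact mul_le_mul_of_nonneg_right (hψ_bdd x) (hπ0_nonneg x)
  have hμ0_bdd : |μ0| ≤ M := by
    rw [hμ0def]
    calc |∫ x, ψ x * π0 x ∂ν| ≤ ∫ x, |ψ x * π0 x| ∂ν := by
          simpa only [Real.norm_eq_abs] using
            norm_integral_le_integral_norm (μ := ν) (f := fun x => ψ x * π0 x)
      _ ≤ ∫ x, M * π0 x ∂ν := by
          refine integral_mono hψπ_int.abs (hπ0_integrable.const_mul M) fun x => ?_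
          rw [abs_mul, abs_of_nonneg (hπ0_nonneg x)]
          exact mul_le_mul_of_nonneg_right (hψ_bdd x) (hπ0_nonneg x)
      _ = M := by rw [integral_const_mul, hπ0_int, mul_one]
  have hqbarw : ∀ᵐ x ∂ν, qbar x * w x = π0 x := by
    filter_upwards [hac] with x hx
    rcases eq_or_ne (qbar x) 0 with h | h
    · simp [hw, h, hx h]
    · rw [hw]; field_simp
  -- law integral computation
  have law_int : ∀ (k : Fin K) (j : ℕ) (g : 𝒳 → ℝ), Measurable g →
      ∫ ω, g (X k j ω) ∂P = ∫ x, q k x * g x ∂ν := by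
    intro k j g hg
    rw [← integral_map (hX_meas k j).aemeasurable hg.aestronglyMeasurable, hX_law k j]
    rw [show (fun x => ENNReal.ofReal (q k x)) = (fun x => ((fun y => (q k y).toNNReal) x : ℝ≥0∞))
      from rfl]
    rw [integral_withDensity_eq_integral_smul ((hq_meas k).real_toNNReal) g]
    congr 1
    funext x
    rw [NNReal.smul_def, Real.coe_toNNReal _ (hq_nonneg k x), smul_eq_mul]
  -- transfer a.e. bound on w to P
  have hwX : ∀ (k : Fin K) (j : ℕ), ∀ᵐ ω ∂P, w (X k j ω) ≤ C := by
    intro k j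
    have h1 : ∀ᵐ x ∂(P.map (X k j)), w x ≤ C := by
      rw [hX_law k j]
      exact hw_bdd.filter_mono (withDensity_absolutelyContinuous ν _).ae_le
    exact (ae_map_iff (hX_meas k j).aemeasurable
      (measurableSet_le hw_meas measurable_const)).mp h1
  -- the per-sample random variables
  set gY : 𝒳 → ℝ := fun x => w x * ψ x with hgY
  have hgY_meas : Measurable gY := hw_meas.mul hψ_meas
  set Y : Fin K × ℕ → Ω → ℝ := fun p => gY ∘ (X p.1 p.2) with hY
  set Z : Fin K × ℕ → Ω → ℝ := fun p => w ∘ (X p.1 p.2) with hZ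
  have hY_indep : iIndepFun Y P :=
    hX_indep.comp (fun _ => gY) (fun _ => hgY_meas)
  have hZ_indep : iIndepFun Z P :=
    hX_indep.comp (fun _ => w) (fun _ => hw_meas)
  have hgY_bdd : ∀ᵐ x ∂ν, ‖gY x‖ ≤ C * M := by
    filter_upwards [hw_bdd] with x hx
    rw [Real.norm_eq_abs, hgY]
    calc |w x * ψ x| = w x * |ψ x| := by rw [abs_mul, abs_of_nonneg (hw_nonneg x)]
      _ ≤ C * M := mul_le_mul hx (hψ_bdd x) (abs_nonneg _) hC.le
  have hYX : ∀ (k : Fin K) (j : ℕ), ∀ᵐ ω ∂P, ‖gY (X k j ω)‖ ≤ C * M := by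
    intro k j
    have h1 : ∀ᵐ x ∂(P.map (X k j)), ‖gY x‖ ≤ C * M := by
      rw [hX_law k j]
      exact hgY_bdd.filter_mono (withDensity_absolutelyContinuous ν _).ae_le
    exact (ae_map_iff (hX_meas k j).aemeasurable
      (measurableSet_le hgY_meas.norm measurable_const)).mp h1
  have hZ_bdd : ∀ p : Fin K × ℕ, ∀ᵐ ω ∂P, ‖Z p ω‖ ≤ C := by
    intro p
    filter_upwards [hwX p.1 p.2] with ω hω
    rw [hZ]
    simpa [Real.norm_eq_abs, abs_of_nonneg (hw_nonneg (X p.1 p.2 ω))] using hω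
  have hY_bdd : ∀ p : Fin K × ℕ, ∀ᵐ ω ∂P, ‖Y p ω‖ ≤ C * M := fun p => hYX p.1 p.2
  have hZmem : ∀ p : Fin K × ℕ, MemLp (Z p) 2 P := fun p =>
    MemLp.of_bound ((hw_meas.comp (hX_meas p.1 p.2)).aestronglyMeasurable) C (hZ_bdd p)
  have hYmem : ∀ p : Fin K × ℕ, MemLp (Y p) 2 P := fun p =>
    MemLp.of_bound ((hgY_meas.comp (hX_meas p.1 p.2)).aestronglyMeasurable) (C * M) (hY_bdd p)
  have hZint : ∀ p : Fin K × ℕ, Integrable (Z p) P := fun p => (hZmem p).integrable one_le_two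
  have hYint : ∀ p : Fin K × ℕ, Integrable (Y p) P := fun p => (hYmem p).integrable one_le_two
  -- variance bounds
  have var_bdd : ∀ (f : Ω → ℝ) (B : ℝ), 0 ≤ B → MemLp f 2 P → (∀ᵐ ω ∂P, ‖f ω‖ ≤ B) →
      variance f P ≤ B ^ 2 := by
    intro f B hB hmem hbdd
    calc variance f P ≤ ∫ ω, (f ^ 2) ω ∂P := variance_le_expectation_sq hmem.1
      _ ≤ ∫ _ω, B ^ 2 ∂P := by
          refine integral_mono_of_nonneg (Eventually.of_forall fun ω => by
            simp [Pi.pow_apply, sq_nonneg]) (integrable_const _) ?_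
          filter_upwards [hbdd] with ω hω
          simp only [Pi.pow_apply]
          rw [Real.norm_eq_abs] at hω
          exact sq_le_sq' (by linarith [(abs_le.mp hω).1]) (abs_le.mp hω).2
      _ = B ^ 2 := by simp
  have hZvar : ∀ p : Fin K × ℕ, variance (Z p) P ≤ C ^ 2 :=
    fun p => var_bdd _ _ hC.le (hZmem p) (hZ_bdd p)
  have hYvar : ∀ p : Fin K × ℕ, variance (Y p) P ≤ (C * M) ^ 2 :=
    fun p => var_bdd _ _ (by positivity) (hYmem p) (hY_bdd p)
  -- expectations
  have hEZ : ∀ p : Fin K × ℕ, ∫ ω, Z p ω ∂P = ∫ x, q p.1 x * w x ∂ν := fun p =>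
    law_int p.1 p.2 w hw_meas
  have hEY : ∀ p : Fin K × ℕ, ∫ ω, Y p ω ∂P = ∫ x, q p.1 x * gY x ∂ν := fun p =>
    law_int p.1 p.2 gY hgY_meas
  -- ν-side integrability
  have hqw_int : ∀ k, Integrable (fun x => q k x * w x) ν := by
    intro k
    refine ((hq_integrable k).const_mul C).mono'
      (((hq_meas k).mul hw_meas).aestronglyMeasurable) ?_
    filter_upwards [hw_bdd] with x hx
    rw [Real.norm_eq_abs, abs_of_nonneg (mul_nonneg (hq_nonneg k x) (hw_nonneg x))]
    calc q k x * w x ≤ q k x * C := mul_le_mul_of_nonneg_left hx (hq_nonneg k x)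
      _ = C * q k x := mul_comm _ _
  have hqwψ_int : ∀ k, Integrable (fun x => q k x * gY x) ν := by
    intro k
    refine ((hq_integrable k).const_mul (C * M)).mono'
      (((hq_meas k).mul hgY_meas).aestronglyMeasurable) ?_
    filter_upwards [hgY_bdd] with x hx
    rw [Real.norm_eq_abs, abs_mul, abs_of_nonneg (hq_nonneg k x)]
    rw [Real.norm_eq_abs] at hx
    calc q k x * |gY x| ≤ q k x * (C * M) :=
          mul_le_mul_of_nonneg_left hx (hq_nonneg k x)
      _ = C * M * q k x := mul_comm _ _
  -- sums over k
  have hsum_w : ∑ k : Fin K, (∫ x, q k x * w x ∂ν) = (K : ℝ) := by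
    rw [← integral_finset_sum _ (fun k _ => hqw_int k)]
    have h1 : ∀ x, (∑ k : Fin K, q k x * w x) = (K : ℝ) * (qbar x * w x) := by
      intro x
      simp only [hqbar, ← Finset.sum_mul]
      field_simp
    rw [integral_congr_ae (Eventually.of_forall h1)]
    have h2 : ∀ᵐ x ∂ν, (K : ℝ) * (qbar x * w x) = (K : ℝ) * π0 x := by
      filter_upwards [hqbarw] with x hx; rw [hx]
    rw [integral_congr_ae h2, integral_const_mul, hπ0_int, mul_one]
  have hsum_wψ : ∑ k : Fin K, (∫ x, q k x * gY x ∂ν) = (K : ℝ) * μ0 := by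
    rw [← integral_finset_sum _ (fun k _ => hqwψ_int k)]
    have h1 : ∀ x, (∑ k : Fin K, q k x * gY x) = (K : ℝ) * (qbar x * w x * ψ x) := by
      intro x
      simp only [hqbar, hgY, ← Finset.sum_mul]
      field_simp
    rw [integral_congr_ae (Eventually.of_forall h1)]
    have h2 : ∀ᵐ x ∂ν, (K : ℝ) * (qbar x * w x * ψ x) = (K : ℝ) * (ψ x * π0 x) := by
      filter_upwards [hqbarw] with x hx; rw [hx]; ring
    rw [integral_congr_ae h2, integral_const_mul, hμ0def]
  -- the constant in the final bound
  set B : ℝ := 8 * (C * M) ^ 2 + (8 * μ0 ^ 2 + 16 * M ^ 2) * C ^ 2 with hB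
  have hB0 : 0 ≤ B := by positivity
  -- key estimate for each J ≥ 1
  have key : ∀ J : ℕ, 1 ≤ J →
      (∫ ω, ((∑ k : Fin K, ∑ j ∈ Finset.range J, w (X k j ω) * ψ (X k j ω)) /
          (∑ k : Fin K, ∑ j ∈ Finset.range J, w (X k j ω)) - μ0) ^ 2 ∂P)
        ≤ B / ((J : ℝ) * (K : ℝ)) := by
    intro J hJ
    set n : ℝ := (J : ℝ) * (K : ℝ) with hn
    have hnpos : (0:ℝ) < n := by
      have : (0:ℝ) < (J:ℝ) := by exact_mod_cast hJ
      positivity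
    set A : Finset (Fin K × ℕ) := Finset.univ ×ˢ Finset.range J with hA
    have hAcard : (A.card : ℝ) = n := by
      rw [hA, Finset.card_product, Finset.card_univ, Finset.card_range]
      simp [hn]
      ring
    set SJ : Ω → ℝ := ∑ p ∈ A, Y p with hSJ
    set DJ : Ω → ℝ := ∑ p ∈ A, Z p with hDJ
    have hSJ_apply : ∀ ω, SJ ω =
        ∑ k : Fin K, ∑ j ∈ Finset.range J, w (X k j ω) * ψ (X k j ω) := by
      intro ω
      rw [hSJ, Finset.sum_apply, Finset.sum_product]
      rfl
    have hDJ_apply : ∀ ω, DJ ω = ∑ k : Fin K, ∑ j ∈ Finset.range J, w (X k j ω) := by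
      intro ω
      rw [hDJ, Finset.sum_apply, Finset.sum_product]
      rfl
    have hSJ_mem : MemLp SJ 2 P := memLp_finset_sum' A (fun p _ => hYmem p)
    have hDJ_mem : MemLp DJ 2 P := memLp_finset_sum' A (fun p _ => hZmem p)
    -- expectations of the sums
    have hESJ : ∫ ω, SJ ω ∂P = n * μ0 := by
      have e1 : ∫ ω, SJ ω ∂P = ∑ p ∈ A, ∫ ω, Y p ω ∂P := by
        simp only [hSJ, Finset.sum_apply]
        exact integral_finset_sum A (fun p _ => hYint p)
      rw [e1]
      have e2 : ∑ p ∈ A, ∫ ω, Y p ω ∂P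
          = ∑ k : Fin K, ∑ _j ∈ Finset.range J, ∫ x, q k x * gY x ∂ν := by
        rw [hA, Finset.sum_product]
        exact Finset.sum_congr rfl fun k _ => Finset.sum_congr rfl fun j _ => hEY (k, j)
      rw [e2]
      calc ∑ k : Fin K, ∑ _j ∈ Finset.range J, (∫ x, q k x * gY x ∂ν)
          = ∑ k : Fin K, (J : ℝ) * ∫ x, q k x * gY x ∂ν := by
            simp [Finset.sum_const, nsmul_eq_mul]
        _ = (J : ℝ) * ∑ k : Fin K, ∫ x, q k x * gY x ∂ν := by rw [Finset.mul_sum]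
        _ = n * μ0 := by rw [hsum_wψ, hn]; ring
    have hEDJ : ∫ ω, DJ ω ∂P = n := by
      have e1 : ∫ ω, DJ ω ∂P = ∑ p ∈ A, ∫ ω, Z p ω ∂P := by
        simp only [hDJ, Finset.sum_apply]
        exact integral_finset_sum A (fun p _ => hZint p)
      rw [e1]
      have e2 : ∑ p ∈ A, ∫ ω, Z p ω ∂P
          = ∑ k : Fin K, ∑ _j ∈ Finset.range J, ∫ x, q k x * w x ∂ν := by
        rw [hA, Finset.sum_product]
        exact Finset.sum_congr rfl fun k _ => Finset.sum_congr rfl fun j _ => hEZ (k, j)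
      rw [e2]
      calc ∑ k : Fin K, ∑ _j ∈ Finset.range J, (∫ x, q k x * w x ∂ν)
          = ∑ k : Fin K, (J : ℝ) * ∫ x, q k x * w x ∂ν := by
            simp [Finset.sum_const, nsmul_eq_mul]
        _ = (J : ℝ) * ∑ k : Fin K, ∫ x, q k x * w x ∂ν := by rw [Finset.mul_sum]
        _ = n := by rw [hsum_w, hn]
    -- variances of the sums
    have hvarSJ : variance SJ P ≤ n * (C * M) ^ 2 := by
      rw [hSJ, IndepFun.variance_sum (fun p _ => hYmem p)
        (fun p _ p' _ hne => hY_indep.indepFun hne)]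
      calc ∑ p ∈ A, variance (Y p) P ≤ A.card • ((C * M) ^ 2) :=
            Finset.sum_le_card_nsmul A _ _ (fun p _ => hYvar p)
        _ = n * (C * M) ^ 2 := by rw [nsmul_eq_mul, hAcard]
    have hvarDJ : variance DJ P ≤ n * C ^ 2 := by
      rw [hDJ, IndepFun.variance_sum (fun p _ => hZmem p)
        (fun p _ p' _ hne => hZ_indep.indepFun hne)]
      calc ∑ p ∈ A, variance (Z p) P ≤ A.card • (C ^ 2) :=
            Finset.sum_le_card_nsmul A _ _ (fun p _ => hZvar p)
        _ = n * C ^ 2 := by rw [nsmul_eq_mul, hAcard]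
    -- second moments of normalized deviations
    have moment_eq : ∀ (f : Ω → ℝ) (m : ℝ), MemLp f 2 P → (∫ ω, f ω ∂P) = n * m →
        ∫ ω, (f ω / n - m) ^ 2 ∂P = (n⁻¹) ^ 2 * variance f P := by
      intro f m hmem hEf
      have hvar : variance f P = ∫ ω, (f ω - n * m) ^ 2 ∂P := by
        rw [variance_eq_integral hmem.1.aemeasurable]
        apply integral_congr_ae
        refine Eventually.of_forall fun ω => ?_
        simp only [Pi.pow_apply, Pi.sub_apply]
        rw [hEf]
      rw [hvar, ← integral_const_mul]
      apply integral_congr_ae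
      refine Eventually.of_forall fun ω => ?_
      field_simp
    have hmomS : ∫ ω, (SJ ω / n - μ0) ^ 2 ∂P ≤ (C * M) ^ 2 / n := by
      rw [moment_eq SJ μ0 hSJ_mem hESJ]
      calc (n⁻¹) ^ 2 * variance SJ P ≤ (n⁻¹) ^ 2 * (n * (C * M) ^ 2) := by
            exact mul_le_mul_of_nonneg_left hvarSJ (by positivity)
        _ = (C * M) ^ 2 / n := by field_simp
    have hmomD : ∫ ω, (DJ ω / n - 1) ^ 2 ∂P ≤ C ^ 2 / n := by
      rw [moment_eq DJ 1 hDJ_mem (by rw [hEDJ, mul_one])]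
      calc (n⁻¹) ^ 2 * variance DJ P ≤ (n⁻¹) ^ 2 * (n * C ^ 2) := by
            exact mul_le_mul_of_nonneg_left hvarDJ (by positivity)
        _ = C ^ 2 / n := by field_simp
    -- integrability of the dominating function
    have hint1 : Integrable (fun ω => (SJ ω / n - μ0) ^ 2) P := by
      have h := (hSJ_mem.const_mul (n⁻¹)).sub (memLp_const (p := 2) (μ := P) μ0)
      have h2 : MemLp (fun ω => SJ ω / n - μ0) 2 P := by
        refine h.ae_eq (Eventually.of_forall fun ω => ?_)
        simp [Pi.sub_apply, div_eq_inv_mul]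
      exact h2.integrable_sq
    have hint2 : Integrable (fun ω => (DJ ω / n - 1) ^ 2) P := by
      have h := (hDJ_mem.const_mul (n⁻¹)).sub (memLp_const (p := 2) (μ := P) (1:ℝ))
      have h2 : MemLp (fun ω => DJ ω / n - 1) 2 P := by
        refine h.ae_eq (Eventually.of_forall fun ω => ?_)
        simp [Pi.sub_apply, div_eq_inv_mul]
      exact h2.integrable_sq
    -- pointwise inequality and conclusion
    have hpt : ∀ ω,
        ((∑ k : Fin K, ∑ j ∈ Finset.range J, w (X k j ω) * ψ (X k j ω)) /
          (∑ k : Fin K, ∑ j ∈ Finset.range J, w (X k j ω)) - μ0) ^ 2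
        ≤ 8 * (SJ ω / n - μ0) ^ 2 + (8 * μ0 ^ 2 + 16 * M ^ 2) * (DJ ω / n - 1) ^ 2 := by
      intro ω
      rw [← hSJ_apply ω, ← hDJ_apply ω]
      have hDnn : 0 ≤ DJ ω := by
        rw [hDJ, Finset.sum_apply]
        exact Finset.sum_nonneg fun p _ => hw_nonneg _
      have hSD : |SJ ω| ≤ M * DJ ω := by
        rw [hSJ, hDJ, Finset.sum_apply, Finset.sum_apply]
        calc |∑ p ∈ A, Y p ω| ≤ ∑ p ∈ A, |Y p ω| := Finset.abs_sum_le_sum_abs _ _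
          _ ≤ ∑ p ∈ A, M * Z p ω := by
              refine Finset.sum_le_sum fun p _ => ?_
              show |gY (X p.1 p.2 ω)| ≤ M * w (X p.1 p.2 ω)
              rw [hgY]
              calc |w (X p.1 p.2 ω) * ψ (X p.1 p.2 ω)|
                  = w (X p.1 p.2 ω) * |ψ (X p.1 p.2 ω)| := by
                    rw [abs_mul, abs_of_nonneg (hw_nonneg _)]
                _ ≤ w (X p.1 p.2 ω) * M :=
                    mul_le_mul_of_nonneg_left (hψ_bdd _) (hw_nonneg _)
                _ = M * w (X p.1 p.2 ω) := mul_comm _ _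
          _ = M * ∑ p ∈ A, Z p ω := by rw [Finset.mul_sum]
      exact aux_real M μ0 (SJ ω) (DJ ω) n hM0 hμ0_bdd hDnn hSD hnpos
    calc (∫ ω, ((∑ k : Fin K, ∑ j ∈ Finset.range J, w (X k j ω) * ψ (X k j ω)) /
          (∑ k : Fin K, ∑ j ∈ Finset.range J, w (X k j ω)) - μ0) ^ 2 ∂P)
        ≤ ∫ ω, (8 * (SJ ω / n - μ0) ^ 2
            + (8 * μ0 ^ 2 + 16 * M ^ 2) * (DJ ω / n - 1) ^ 2) ∂P := by
          refine integral_mono_of_nonneg (Eventually.of_forall fun ω => sq_nonneg _)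
            ((hint1.const_mul 8).add (hint2.const_mul _)) (Eventually.of_forall hpt)
      _ = 8 * (∫ ω, (SJ ω / n - μ0) ^ 2 ∂P)
            + (8 * μ0 ^ 2 + 16 * M ^ 2) * ∫ ω, (DJ ω / n - 1) ^ 2 ∂P := by
          rw [integral_add (hint1.const_mul 8) (hint2.const_mul _),
            integral_const_mul, integral_const_mul]
      _ ≤ 8 * ((C * M) ^ 2 / n) + (8 * μ0 ^ 2 + 16 * M ^ 2) * (C ^ 2 / n) := by
          gcongr
      _ = B / n := by rw [hB]; field_simp
  -- conclusion by squeezing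
  apply squeeze_zero' (g := fun J : ℕ => B / (J : ℝ))
  · exact Eventually.of_forall fun J => integral_nonneg fun ω => sq_nonneg _
  · filter_upwards [eventually_ge_atTop 1] with J hJ
    refine (key J hJ).trans ?_
    have hJpos : (0:ℝ) < (J:ℝ) := by exact_mod_cast hJ
    apply div_le_div_of_nonneg_left hB0 hJpos
    exact le_mul_of_one_le_right hJpos.le (by exact_mod_cast hK)
  · exact tendsto_const_div_atTop_nhds_zero_nat B
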